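/- For every real x ≠ 0, one has tanh x / x ≤ 2/(√(9 + 4x²) − 1), and moreover 2/(√(9+4x²)−1) − tanh x / x → 0 as x → ∞. -/

import Mathlib

open Real Filter Topology

private lemma aux_nonneg (f g : ℝ → ℝ) (h0 : f 0 = 0)
    (hd : ∀ x, HasDerivAt f (g x) x) (hg : ∀ x, 0 ≤ x → 0 ≤ g x) :
    ∀ x, 0 ≤ x → 0 ≤ f x := by
  intro x hx
  have mono : MonotoneOn f (Set.Ici 0) :=
    monotoneOn_of_deriv_nonneg (convex_Ici 0)
      (fun y _ => (hd y).continuousAt.continuousWithinAt)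
      (fun y _ => (hd y).differentiableAt.differentiableWithinAt)
      (fun y hy => by
        rw [(hd y).deriv]
        exact hg y (le_of_lt (by simpa [interior_Ici] using hy)))
  have h := mono Set.self_mem_Ici hx hx
  rwa [h0] at h

private lemma key_ineq : ∀ x : ℝ, 0 ≤ x →
    2 * Real.sinh x ^ 2 ≤ x ^ 2 + x * (Real.sinh x * Real.cosh x) := by
  have h3 : ∀ x : ℝ, 0 ≤ x →
      0 ≤ -4 * (Real.sinh x * Real.cosh x) + 4 * (x * (Real.cosh x ^ 2 + Real.sinh x ^ 2)) := by
    apply aux_nonneg _ (fun x => 16 * (x * (Real.sinh x * Real.cosh x)))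
    · simp
    · intro x
      have hs := Real.hasDerivAt_sinh x
      have hc := Real.hasDerivAt_cosh x
      exact (((hs.mul hc).const_mul (-4)).add
        (((hasDerivAt_id x).mul ((hc.pow 2).add (hs.pow 2))).const_mul 4)).congr_deriv (by simp only [id_eq, Pi.add_apply, Pi.mul_apply, Pi.pow_apply]; ring)
    · intro x hx
      have := Real.sinh_nonneg_iff.mpr hx
      have := (Real.cosh_pos x).le
      positivity
  have h2 : ∀ x : ℝ, 0 ≤ x →
      0 ≤ 2 - 2 * Real.cosh x ^ 2 - 2 * Real.sinh x ^ 2 + 4 * (x * (Real.sinh x * Real.cosh x)) := by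
    apply aux_nonneg _ (fun x => -4 * (Real.sinh x * Real.cosh x) + 4 * (x * (Real.cosh x ^ 2 + Real.sinh x ^ 2)))
    · simp
    · intro x
      have hs := Real.hasDerivAt_sinh x
      have hc := Real.hasDerivAt_cosh x
      exact ((((hasDerivAt_const x 2).sub ((hc.pow 2).const_mul 2)).sub
        ((hs.pow 2).const_mul 2)).add
        (((hasDerivAt_id x).mul (hs.mul hc)).const_mul 4)).congr_deriv (by simp only [id_eq, Pi.add_apply, Pi.mul_apply, Pi.pow_apply]; ring)
    · exact h3
  have h1 : ∀ x : ℝ, 0 ≤ x →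
      0 ≤ 2 * x + x * Real.cosh x ^ 2 + x * Real.sinh x ^ 2 - 3 * (Real.sinh x * Real.cosh x) := by
    apply aux_nonneg _ (fun x => 2 - 2 * Real.cosh x ^ 2 - 2 * Real.sinh x ^ 2 + 4 * (x * (Real.sinh x * Real.cosh x)))
    · simp
    · intro x
      have hs := Real.hasDerivAt_sinh x
      have hc := Real.hasDerivAt_cosh x
      exact ((((hasDerivAt_id x).const_mul 2).add
        ((hasDerivAt_id x).mul (hc.pow 2))).add
        ((hasDerivAt_id x).mul (hs.pow 2))
        |>.sub ((hs.mul hc).const_mul 3)).congr_deriv (by simp only [id_eq, Pi.add_apply, Pi.mul_apply, Pi.pow_apply]; ring)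
    · exact h2
  have h0 : ∀ x : ℝ, 0 ≤ x →
      0 ≤ x ^ 2 + x * (Real.sinh x * Real.cosh x) - 2 * Real.sinh x ^ 2 := by
    apply aux_nonneg _ (fun x => 2 * x + x * Real.cosh x ^ 2 + x * Real.sinh x ^ 2 - 3 * (Real.sinh x * Real.cosh x))
    · simp
    · intro x
      have hs := Real.hasDerivAt_sinh x
      have hc := Real.hasDerivAt_cosh x
      exact (((hasDerivAt_pow 2 x).add
        ((hasDerivAt_id x).mul (hs.mul hc))).sub ((hs.pow 2).const_mul 2)).congr_deriv (by simp only [id_eq, Pi.add_apply, Pi.mul_apply, Pi.pow_apply]; ring)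
    · exact h1
  intro x hx
  linarith [h0 x hx]

private lemma main_pos : ∀ x : ℝ, 0 < x →
    Real.tanh x / x ≤ 2 / (Real.sqrt (9 + 4 * x ^ 2) - 1) := by
  intro x hx
  set r := Real.sqrt (9 + 4 * x ^ 2) with hrdef
  have hr2 : r ^ 2 = 9 + 4 * x ^ 2 := Real.sq_sqrt (by positivity)
  have hr0 : 0 ≤ r := Real.sqrt_nonneg _
  have hr3 : 3 ≤ r := by nlinarith [sq_nonneg (r - 3)]
  have hc := Real.cosh_pos x
  have hs : 0 ≤ Real.sinh x := Real.sinh_nonneg_iff.mpr hx.le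
  have hkey := key_ineq x hx.le
  have hc2 : Real.cosh x ^ 2 = Real.sinh x ^ 2 + 1 := Real.cosh_sq x
  rw [div_le_div_iff₀ hx (by linarith : (0:ℝ) < r - 1), Real.tanh_eq_sinh_div_cosh,
    div_mul_eq_mul_div, div_le_iff₀ hc]
  -- goal : sinh x * (r - 1) ≤ 2 * x * cosh x
  have hsq : (Real.sinh x * r) ^ 2 ≤ (2 * x * Real.cosh x + Real.sinh x) ^ 2 := by
    nlinarith [hkey, hc2, mul_pos hx hc, mul_nonneg hs hc.le]
  have hle : Real.sinh x * r ≤ 2 * x * Real.cosh x + Real.sinh x := by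
    nlinarith [mul_nonneg hs hr0, mul_pos hx hc]
  linarith
private lemma abs_tanh_le (x : ℝ) : |Real.tanh x| ≤ 1 := by
  have hc := Real.cosh_pos x
  rw [Real.tanh_eq_sinh_div_cosh, abs_div, abs_of_pos hc, div_le_one hc]
  nlinarith [Real.cosh_sq_sub_sinh_sq x, sq_abs (Real.sinh x), abs_nonneg (Real.sinh x)]

theorem stmt8 :
    (∀ x : ℝ, x ≠ 0 →
      Real.tanh x / x ≤ 2 / (Real.sqrt (9 + 4 * x ^ 2) - 1)) ∧
    Filter.Tendsto
      (fun x : ℝ => 2 / (Real.sqrt (9 + 4 * x ^ 2) - 1) - Real.tanh x / x)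
      Filter.atTop (nhds 0) := by
  constructor
  · intro x hx
    rcases lt_or_gt_of_ne hx with h | h
    · have := main_pos (-x) (by linarith)
      rw [Real.tanh_neg, neg_div_neg_eq, neg_pow] at this
      simpa using this
    · exact main_pos x h
  · have h1 : Tendsto (fun x : ℝ => 2 / (Real.sqrt (9 + 4 * x ^ 2) - 1)) atTop (nhds 0) := by
      have ht : Tendsto (fun x : ℝ => Real.sqrt (9 + 4 * x ^ 2) - 1) atTop atTop := by
        refine tendsto_atTop_mono' atTop ?_ tendsto_id
        filter_upwards [eventually_ge_atTop (0:ℝ)] with x hx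
        have : x + 1 ≤ Real.sqrt (9 + 4 * x ^ 2) := by
          rw [show x + 1 = Real.sqrt ((x+1)^2) from (Real.sqrt_sq (by linarith)).symm]
          apply Real.sqrt_le_sqrt
          nlinarith
        simpa using by linarith
      have := ht.inv_tendsto_atTop.const_mul (2:ℝ)
      simpa [div_eq_mul_inv] using this
    have h2 : Tendsto (fun x : ℝ => Real.tanh x / x) atTop (nhds 0) := by
      refine squeeze_zero_norm' (a := fun x : ℝ => x⁻¹) ?_ tendsto_inv_atTop_zero
      filter_upwards [eventually_ge_atTop (1:ℝ)] with x hx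
      rw [Real.norm_eq_abs, abs_div, abs_of_pos (by linarith : (0:ℝ) < x)]
      rw [div_le_iff₀ (by linarith : (0:ℝ) < x), inv_mul_cancel₀ (by linarith : x ≠ 0)]
      exact abs_tanh_le x
    simpa using h1.sub h2
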